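/- Let Γ be a countable discrete group, L : Γ → ℕ a function, and C_n := {γ ∈ Γ : L(γ) = n}. Assume the Jolissaint hypothesis: there exists c > 0 such that for all k, l, m ∈ ℕ and all finitely supported f, g : Γ → ℂ with supp f ⊆ C_k and supp g ⊆ C_l, one has ‖(f*g)·χ_{C_m}‖₂ ≤ c‖f‖₂‖g‖₂ whenever |k−l| ≤ m ≤ k+l, and (f*g)·χ_{C_m} = 0 whenever m < |k−l| or m > k+l. Then there exists C > 0 such that for every k ≥ 1, every finitely supported f : Γ → ℂ with supp f ⊆ C_k, and every g ∈ ℓ²(Γ), the convolution f*g lies in ℓ²(Γ) and ‖f*g‖₂ ≤ C · k · ‖f‖₂ · ‖g‖₂. -/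

import Mathlib

open scoped ENNReal

/-- The ℓ² norm of a function on a discrete group. -/
noncomputable def l2norm {Γ : Type*} (h : Γ → ℂ) : ℝ :=
  (∑' γ, ‖h γ‖ ^ 2) ^ (1/2 : ℝ)

/-- Convolution of functions on a group: `(f*g)(γ) = ∑ₛ f(s) g(s⁻¹γ)`. -/
noncomputable def conv {Γ : Type*} [Group Γ] (f g : Γ → ℂ) : Γ → ℂ :=
  fun γ => ∑' s, f s * g (s⁻¹ * γ)

/-- Pointwise product of `h` with the characteristic function of `A`. -/
noncomputable def restrict {Γ : Type*} (h : Γ → ℂ) (A : Set Γ) : Γ → ℂ :=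
  fun γ => A.indicator h γ

section Helpers

open Finset
open scoped Pointwise

set_option linter.unusedSectionVars false
set_option linter.unusedVariables false

variable {Γ : Type*} [Group Γ] [DecidableEq Γ]

lemma l2norm_eq_sqrt (h : Γ → ℂ) : l2norm h = Real.sqrt (∑' γ, ‖h γ‖ ^ 2) := by
  rw [l2norm, Real.sqrt_eq_rpow]

lemma l2norm_nonneg (h : Γ → ℂ) : 0 ≤ l2norm h := by
  rw [l2norm_eq_sqrt]; exact Real.sqrt_nonneg _

lemma l2norm_finset {h : Γ → ℂ} {s : Finset Γ} (hs : Function.support h ⊆ ↑s) :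
    l2norm h = Real.sqrt (∑ γ ∈ s, ‖h γ‖ ^ 2) := by
  rw [l2norm_eq_sqrt]
  congr 1
  apply tsum_eq_sum
  intro b hb
  have hb0 : h b = 0 := by
    by_contra h0
    exact hb (hs h0)
  simp [hb0]

lemma sq_l2norm_finset {h : Γ → ℂ} {s : Finset Γ} (hs : Function.support h ⊆ ↑s) :
    l2norm h ^ 2 = ∑ γ ∈ s, ‖h γ‖ ^ 2 := by
  rw [l2norm_finset hs, Real.sq_sqrt (Finset.sum_nonneg fun _ _ => by positivity)]

lemma l2norm_zero : l2norm (0 : Γ → ℂ) = 0 := by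
  rw [l2norm_eq_sqrt]
  simp

/-- Embedding of finitely-supported functions into a Euclidean space. -/
noncomputable def toE (P : Finset Γ) : (Γ → ℂ) →ₗ[ℂ] EuclideanSpace ℂ P where
  toFun h := WithLp.toLp 2 (fun γ => h γ)
  map_add' h1 h2 := rfl
  map_smul' a h := rfl

lemma l2norm_eq_norm_toE {P : Finset Γ} {h : Γ → ℂ} (hs : Function.support h ⊆ ↑P) :
    l2norm h = ‖toE P h‖ := by
  rw [l2norm_finset hs, EuclideanSpace.norm_eq]
  congr 1
  exact (Finset.sum_coe_sort P fun γ => ‖h γ‖ ^ 2).symm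

lemma conv_eq_sum {f : Γ → ℂ} {s : Finset Γ} (hf : Function.support f ⊆ ↑s)
    (g : Γ → ℂ) (γ : Γ) :
    conv f g γ = ∑ t ∈ s, f t * g (t⁻¹ * γ) := by
  apply tsum_eq_sum
  intro b hb
  have hb0 : f b = 0 := by
    by_contra h0
    exact hb (hf h0)
  simp [hb0]

lemma support_conv_subset {f g : Γ → ℂ} {sf sg : Finset Γ}
    (hf : Function.support f ⊆ ↑sf) (hg : Function.support g ⊆ ↑sg) :
    Function.support (conv f g) ⊆ ↑(sf * sg) := by
  intro γ hγ
  rw [Function.mem_support, conv_eq_sum hf] at hγ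
  obtain ⟨t, ht, hne⟩ := Finset.exists_ne_zero_of_sum_ne_zero hγ
  have hft : f t ≠ 0 := fun h => hne (by simp [h])
  have hgt : g (t⁻¹ * γ) ≠ 0 := fun h => hne (by simp [h])
  have h1 : t ∈ (sf : Set Γ) := hf hft
  have h2 : t⁻¹ * γ ∈ (sg : Set Γ) := hg hgt
  have hγeq : γ = t * (t⁻¹ * γ) := by group
  rw [Finset.coe_mul, hγeq]
  exact Set.mul_mem_mul h1 h2

end Helpers

section Key

open scoped Pointwise

set_option linter.unusedSectionVars false
set_option linter.unusedVariables false
set_option maxHeartbeats 1000000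

variable {Γ : Type*} [Group Γ] [DecidableEq Γ]

lemma support_restrict {h : Γ → ℂ} {A : Set Γ} :
    Function.support (restrict h A) ⊆ Function.support h := by
  intro x hx
  rw [Function.mem_support] at hx ⊢
  intro h0
  exact hx (by simp [restrict, Set.indicator_apply, h0])

lemma key_finite (L : Γ → ℕ) (C : ℕ → Set Γ) (hC : ∀ n, C n = {γ : Γ | L γ = n})
    (c : ℝ) (hc : 0 < c)
    (hJ : ∀ (k l m : ℕ) (f g : Γ → ℂ),
      (Function.support f).Finite → Function.support f ⊆ C k →
      (Function.support g).Finite → Function.support g ⊆ C l →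
      ((((k : ℤ) - l).natAbs ≤ m ∧ m ≤ k + l →
          l2norm (restrict (conv f g) (C m)) ≤ c * l2norm f * l2norm g) ∧
        (m < ((k : ℤ) - l).natAbs ∨ k + l < m →
          restrict (conv f g) (C m) = 0)))
    (k : ℕ) (f g : Γ → ℂ)
    (hf : (Function.support f).Finite) (hfk : Function.support f ⊆ C k)
    (hg : (Function.support g).Finite) :
    l2norm (conv f g) ≤ c * (2 * k + 1) * l2norm f * l2norm g := by
  classical
  set sf := hf.toFinset with hsf
  set sg := hg.toFinset with hsg
  have hsfc : Function.support f ⊆ ↑sf := by simp [hsf]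
  have hsgc : Function.support g ⊆ ↑sg := by simp [hsg]
  set gl : ℕ → Γ → ℂ := fun l => restrict g (C l) with hgl
  set P : Finset Γ := sf * sg with hP
  set Lg : Finset ℕ := sg.image L with hLg
  set Mset : Finset ℕ := P.image L with hMset
  set win : ℕ → ℕ → Prop := fun l m => (((k : ℤ) - l).natAbs ≤ m ∧ m ≤ k + l) with hwin
  -- basic support facts
  have hgl_suppg : ∀ l, Function.support (gl l) ⊆ Function.support g := fun l => support_restrict
  have hgl_Cl : ∀ l, Function.support (gl l) ⊆ C l := fun l => Set.support_indicator_subset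
  have hglx : ∀ l x, gl l x = if L x = l then g x else 0 := by
    intro l x
    simp [hgl, restrict, Set.indicator_apply, hC l, Set.mem_setOf_eq]
  have hrestrict_apply : ∀ (h : Γ → ℂ) (m : ℕ) (γ : Γ),
      restrict h (C m) γ = if L γ = m then h γ else 0 := by
    intro h m γ
    simp [restrict, Set.indicator_apply, hC m, Set.mem_setOf_eq]
  have hsum_gl : ∀ x, ∑ l ∈ Lg, gl l x = g x := by
    intro x
    rcases eq_or_ne (g x) 0 with h0 | h0
    · rw [h0]
      apply Finset.sum_eq_zero
      intro l _
      rw [hglx]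
      split <;> simp [h0]
    · have hxs : x ∈ sg := hg.mem_toFinset.mpr h0
      rw [Finset.sum_eq_single (L x)]
      · rw [hglx]; simp
      · intro l hl hne
        rw [hglx, if_neg (fun h => hne h.symm)]
      · intro habs
        exact absurd (Finset.mem_image_of_mem L hxs) habs
  have hconv_decomp : ∀ γ, conv f g γ = ∑ l ∈ Lg, conv f (gl l) γ := by
    intro γ
    rw [conv_eq_sum hsfc]
    rw [Finset.sum_congr rfl (fun l _ => conv_eq_sum hsfc (gl l) γ), Finset.sum_comm]
    apply Finset.sum_congr rfl
    intro t _
    rw [← Finset.mul_sum, hsum_gl]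
  have hPconv : Function.support (conv f g) ⊆ ↑P := support_conv_subset hsfc hsgc
  have hPconvl : ∀ l, Function.support (conv f (gl l)) ⊆ ↑P :=
    fun l => support_conv_subset hsfc ((hgl_suppg l).trans hsgc)
  -- (s1) split over levels m
  have hsq_split : l2norm (conv f g) ^ 2
      = ∑ m ∈ Mset, l2norm (restrict (conv f g) (C m)) ^ 2 := by
    rw [sq_l2norm_finset hPconv,
      Finset.sum_congr rfl
        (fun m _ => sq_l2norm_finset (support_restrict.trans hPconv)),
      Finset.sum_comm]
    apply Finset.sum_congr rfl
    intro γ hγ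
    have hLγ : L γ ∈ Mset := Finset.mem_image_of_mem L hγ
    symm
    calc ∑ m ∈ Mset, ‖restrict (conv f g) (C m) γ‖ ^ 2
        = ∑ m ∈ Mset, if L γ = m then ‖conv f g γ‖ ^ 2 else 0 := by
          apply Finset.sum_congr rfl
          intro m _
          rw [hrestrict_apply]
          split <;> simp
      _ = ‖conv f g γ‖ ^ 2 := by rw [Finset.sum_ite_eq, if_pos hLγ]
  -- decomposition of the restricted convolution
  have hdecomp_m : ∀ m, restrict (conv f g) (C m)
      = ∑ l ∈ Lg, restrict (conv f (gl l)) (C m) := by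
    intro m
    funext γ
    rw [Finset.sum_apply]
    simp only [hrestrict_apply]
    by_cases hm : L γ = m
    · simp only [if_pos hm]
      exact hconv_decomp γ
    · simp only [if_neg hm, Finset.sum_const_zero]
  -- (s2) triangle + Jolissaint bounds
  have hq_bound : ∀ m, l2norm (restrict (conv f g) (C m))
      ≤ ∑ l ∈ Lg.filter (fun l => win l m), c * l2norm f * l2norm (gl l) := by
    intro m
    have h1 : l2norm (restrict (conv f g) (C m))
        ≤ ∑ l ∈ Lg, l2norm (restrict (conv f (gl l)) (C m)) := by
      rw [l2norm_eq_norm_toE (support_restrict.trans hPconv), hdecomp_m m, map_sum]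
      refine (norm_sum_le _ _).trans ?_
      apply Finset.sum_le_sum
      intro l _
      rw [← l2norm_eq_norm_toE (support_restrict.trans (hPconvl l))]
    refine h1.trans ?_
    rw [← Finset.sum_filter_add_sum_filter_not Lg (fun l => win l m)]
    have h2 : ∑ l ∈ Lg.filter (fun l => ¬ win l m),
        l2norm (restrict (conv f (gl l)) (C m)) = 0 := by
      apply Finset.sum_eq_zero
      intro l hl
      rw [Finset.mem_filter] at hl
      have hcond : m < ((k : ℤ) - l).natAbs ∨ k + l < m := by
        have := hl.2
        unfold win at this
        omega
      have hz := (hJ k l m f (gl l) hf hfk (hg.subset (hgl_suppg l)) (hgl_Cl l)).2 hcond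
      rw [hz, l2norm_zero]
    rw [h2, add_zero]
    apply Finset.sum_le_sum
    intro l hl
    rw [Finset.mem_filter] at hl
    have hw : ((k : ℤ) - l).natAbs ≤ m ∧ m ≤ k + l := hl.2
    exact (hJ k l m f (gl l) hf hfk (hg.subset (hgl_suppg l)) (hgl_Cl l)).1 hw
  -- cardinality bounds
  have hcard1 : ∀ m, ((Lg.filter (fun l => win l m)).card : ℝ) ≤ 2 * k + 1 := by
    intro m
    have hsub : Lg.filter (fun l => win l m) ⊆ Finset.Icc (m - k) (m + k) := by
      intro l hl
      rw [Finset.mem_filter] at hl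
      rw [Finset.mem_Icc]
      have := hl.2
      unfold win at this
      omega
    have h1 : (Lg.filter (fun l => win l m)).card ≤ 2 * k + 1 := by
      calc (Lg.filter (fun l => win l m)).card ≤ (Finset.Icc (m - k) (m + k)).card :=
            Finset.card_le_card hsub
        _ = m + k + 1 - (m - k) := Nat.card_Icc _ _
        _ ≤ 2 * k + 1 := by omega
    exact_mod_cast Nat.cast_le.mpr h1
  have hcard2 : ∀ l, ((Mset.filter (fun m => win l m)).card : ℝ) ≤ 2 * k + 1 := by
    intro l
    have hsub : Mset.filter (fun m => win l m) ⊆ Finset.Icc (l - k) (l + k) := by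
      intro m hm
      rw [Finset.mem_filter] at hm
      rw [Finset.mem_Icc]
      have := hm.2
      unfold win at this
      omega
    have h1 : (Mset.filter (fun m => win l m)).card ≤ 2 * k + 1 := by
      calc (Mset.filter (fun m => win l m)).card ≤ (Finset.Icc (l - k) (l + k)).card :=
            Finset.card_le_card hsub
        _ = l + k + 1 - (l - k) := Nat.card_Icc _ _
        _ ≤ 2 * k + 1 := by omega
    exact_mod_cast Nat.cast_le.mpr h1
  -- (s4) double counting
  have hdouble : ∑ m ∈ Mset, ∑ l ∈ Lg.filter (fun l => win l m), l2norm (gl l) ^ 2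
      ≤ (2 * k + 1) * ∑ l ∈ Lg, l2norm (gl l) ^ 2 := by
    have hstep : ∑ m ∈ Mset, ∑ l ∈ Lg.filter (fun l => win l m), l2norm (gl l) ^ 2
        = ∑ l ∈ Lg, ((Mset.filter (fun m => win l m)).card : ℝ) * l2norm (gl l) ^ 2 := by
      rw [Finset.sum_congr rfl (fun m _ => Finset.sum_filter _ _), Finset.sum_comm]
      apply Finset.sum_congr rfl
      intro l _
      rw [← Finset.sum_filter, Finset.sum_const, nsmul_eq_mul]
    rw [hstep, Finset.mul_sum]
    apply Finset.sum_le_sum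
    intro l _
    exact mul_le_mul_of_nonneg_right (hcard2 l) (by positivity)
  -- (s5) sum of level norms of g
  have hsum_b : ∑ l ∈ Lg, l2norm (gl l) ^ 2 = l2norm g ^ 2 := by
    rw [sq_l2norm_finset hsgc,
      Finset.sum_congr rfl (fun l _ => sq_l2norm_finset ((hgl_suppg l).trans hsgc)),
      Finset.sum_comm]
    apply Finset.sum_congr rfl
    intro γ hγ
    have hLγ : L γ ∈ Lg := Finset.mem_image_of_mem L hγ
    calc ∑ l ∈ Lg, ‖gl l γ‖ ^ 2
        = ∑ l ∈ Lg, if L γ = l then ‖g γ‖ ^ 2 else 0 := by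
          apply Finset.sum_congr rfl
          intro l _
          rw [hglx]
          split <;> simp
      _ = ‖g γ‖ ^ 2 := by rw [Finset.sum_ite_eq, if_pos hLγ]
  -- assemble
  have hstep1 : ∀ m ∈ Mset, l2norm (restrict (conv f g) (C m)) ^ 2
      ≤ (c * l2norm f) ^ 2 * (2 * k + 1)
        * ∑ l ∈ Lg.filter (fun l => win l m), l2norm (gl l) ^ 2 := by
    intro m hm
    have h2 : l2norm (restrict (conv f g) (C m)) ^ 2
        ≤ (∑ l ∈ Lg.filter (fun l => win l m), c * l2norm f * l2norm (gl l)) ^ 2 :=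
      pow_le_pow_left₀ (l2norm_nonneg _) (hq_bound m) 2
    refine h2.trans ?_
    have h3 : ∑ l ∈ Lg.filter (fun l => win l m), c * l2norm f * l2norm (gl l)
        = (c * l2norm f) * ∑ l ∈ Lg.filter (fun l => win l m), l2norm (gl l) := by
      rw [Finset.mul_sum]
    rw [h3, mul_pow, mul_assoc]
    apply mul_le_mul_of_nonneg_left _ (by positivity)
    calc (∑ l ∈ Lg.filter (fun l => win l m), l2norm (gl l)) ^ 2
        ≤ ((Lg.filter (fun l => win l m)).card : ℝ)
            * ∑ l ∈ Lg.filter (fun l => win l m), l2norm (gl l) ^ 2 := by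
          exact sq_sum_le_card_mul_sum_sq
      _ ≤ (2 * k + 1) * ∑ l ∈ Lg.filter (fun l => win l m), l2norm (gl l) ^ 2 :=
          mul_le_mul_of_nonneg_right (hcard1 m)
            (Finset.sum_nonneg fun _ _ => by positivity)
  have hfinal_sq : l2norm (conv f g) ^ 2 ≤ (c * (2 * k + 1) * l2norm f * l2norm g) ^ 2 := by
    rw [hsq_split]
    calc ∑ m ∈ Mset, l2norm (restrict (conv f g) (C m)) ^ 2
        ≤ ∑ m ∈ Mset, (c * l2norm f) ^ 2 * (2 * k + 1)
            * ∑ l ∈ Lg.filter (fun l => win l m), l2norm (gl l) ^ 2 :=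
          Finset.sum_le_sum hstep1
      _ = (c * l2norm f) ^ 2 * (2 * k + 1)
            * ∑ m ∈ Mset, ∑ l ∈ Lg.filter (fun l => win l m), l2norm (gl l) ^ 2 := by
          rw [Finset.mul_sum]
      _ ≤ (c * l2norm f) ^ 2 * (2 * k + 1)
            * ((2 * k + 1) * ∑ l ∈ Lg, l2norm (gl l) ^ 2) := by
          apply mul_le_mul_of_nonneg_left hdouble (by positivity)
      _ = (c * (2 * k + 1) * l2norm f * l2norm g) ^ 2 := by
          rw [hsum_b]; ring
  have ha := l2norm_nonneg (conv f g)
  have hb : (0 : ℝ) ≤ c * (2 * k + 1) * l2norm f * l2norm g := by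
    have := l2norm_nonneg f
    have := l2norm_nonneg g
    positivity
  nlinarith [hfinal_sq, ha, hb, sq_nonneg (l2norm (conv f g) - c * (2 * k + 1) * l2norm f * l2norm g)]

end Key

theorem stmt1 {Γ : Type*} [Group Γ] [Countable Γ] (L : Γ → ℕ)
    (C : ℕ → Set Γ) (hC : ∀ n, C n = {γ : Γ | L γ = n})
    (hJol : ∃ c > (0 : ℝ), ∀ (k l m : ℕ) (f g : Γ → ℂ),
      (Function.support f).Finite → Function.support f ⊆ C k →
      (Function.support g).Finite → Function.support g ⊆ C l →
      ((((k : ℤ) - l).natAbs ≤ m ∧ m ≤ k + l →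
          l2norm (restrict (conv f g) (C m)) ≤ c * l2norm f * l2norm g) ∧
        (m < ((k : ℤ) - l).natAbs ∨ k + l < m →
          restrict (conv f g) (C m) = 0))) :
    ∃ C' > (0 : ℝ), ∀ (k : ℕ), 1 ≤ k → ∀ (f g : Γ → ℂ),
      (Function.support f).Finite → Function.support f ⊆ C k →
      Summable (fun γ => ‖g γ‖ ^ 2) →
      Summable (fun γ => ‖conv f g γ‖ ^ 2) ∧
        l2norm (conv f g) ≤ C' * (k : ℝ) * l2norm f * l2norm g := by
  classical
  open scoped Pointwise in
  obtain ⟨c, hc, hJ⟩ := hJol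
  refine ⟨3 * c, by linarith, ?_⟩
  intro k hk f g hf hfk hg2
  set sf := hf.toFinset with hsf
  have hsfc : Function.support f ⊆ ↑sf := by simp [hsf]
  have hFnonneg : 0 ≤ l2norm f := l2norm_nonneg f
  have hGnonneg : 0 ≤ l2norm g := l2norm_nonneg g
  have hknn : (1 : ℝ) ≤ (k : ℝ) := by exact_mod_cast hk
  have h2k3 : (2 * (k : ℝ) + 1) ≤ 3 * (k : ℝ) := by linarith
  set B : ℝ := 3 * c * (k : ℝ) * l2norm f * l2norm g with hB
  have hBnonneg : 0 ≤ B := by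
    rw [hB]; positivity
  have hbound : ∀ F' : Finset Γ, ∑ γ ∈ F', ‖conv f g γ‖ ^ 2 ≤ B ^ 2 := by
    intro F'
    set T : Finset Γ := sf⁻¹ * F' with hT
    set g' : Γ → ℂ := restrict g ↑T with hg'
    have hg'supp : Function.support g' ⊆ ↑T := Set.support_indicator_subset
    have hg'fin : (Function.support g').Finite := T.finite_toSet.subset hg'supp
    have hG'nonneg : 0 ≤ l2norm g' := l2norm_nonneg g'
    have hkey := key_finite L C hC c hc hJ k f g' hf hfk hg'fin
    have hagree : ∀ γ ∈ F', conv f g γ = conv f g' γ := by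
      intro γ hγ
      unfold conv
      apply tsum_congr
      intro s
      rcases eq_or_ne (f s) 0 with h0 | h0
      · simp [h0]
      · have hs : s ∈ sf := Finset.mem_coe.mp (hsfc (Function.mem_support.mpr h0))
        have hmem : s⁻¹ * γ ∈ T := by
          rw [hT]
          exact Finset.mul_mem_mul (Finset.inv_mem_inv hs) hγ
        have hgg : g' (s⁻¹ * γ) = g (s⁻¹ * γ) := by
          rw [hg']
          simp [restrict, Set.indicator_apply, hmem]
        rw [hgg]
    have hg'le : l2norm g' ≤ l2norm g := by
      rw [l2norm_finset hg'supp, l2norm_eq_sqrt g]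
      apply Real.sqrt_le_sqrt
      calc ∑ γ ∈ T, ‖g' γ‖ ^ 2
          ≤ ∑ γ ∈ T, ‖g γ‖ ^ 2 := by
            apply Finset.sum_le_sum
            intro γ _
            have hle : ‖g' γ‖ ≤ ‖g γ‖ := by
              rw [hg']
              simp only [restrict, Set.indicator_apply]
              split <;> simp
            exact pow_le_pow_left₀ (norm_nonneg _) hle 2
        _ ≤ ∑' γ, ‖g γ‖ ^ 2 := Summable.sum_le_tsum T (fun γ _ => by positivity) hg2
    have hsupp' : Function.support (conv f g') ⊆ ↑(F' ∪ sf * T) := by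
      refine (support_conv_subset hsfc hg'supp).trans ?_
      intro x hx
      simp only [Finset.coe_union]
      exact Or.inr hx
    have hlast : c * (2 * (k : ℝ) + 1) * l2norm f * l2norm g' ≤ B := by
      rw [hB]
      have h1 : c * (2 * (k : ℝ) + 1) * l2norm f * l2norm g'
          ≤ c * (3 * (k : ℝ)) * l2norm f * l2norm g := by
        apply mul_le_mul _ hg'le hG'nonneg (by positivity)
        apply mul_le_mul _ le_rfl hFnonneg (by positivity)
        exact mul_le_mul_of_nonneg_left h2k3 hc.le
      calc c * (2 * (k : ℝ) + 1) * l2norm f * l2norm g'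
          ≤ c * (3 * (k : ℝ)) * l2norm f * l2norm g := h1
        _ = 3 * c * (k : ℝ) * l2norm f * l2norm g := by ring
    calc ∑ γ ∈ F', ‖conv f g γ‖ ^ 2
        = ∑ γ ∈ F', ‖conv f g' γ‖ ^ 2 :=
          Finset.sum_congr rfl (fun γ hγ => by rw [hagree γ hγ])
      _ ≤ ∑ γ ∈ F' ∪ sf * T, ‖conv f g' γ‖ ^ 2 :=
          Finset.sum_le_sum_of_subset_of_nonneg Finset.subset_union_left
            (fun _ _ _ => by positivity)
      _ = l2norm (conv f g') ^ 2 := (sq_l2norm_finset hsupp').symm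
      _ ≤ (c * (2 * (k : ℝ) + 1) * l2norm f * l2norm g') ^ 2 := by
          apply pow_le_pow_left₀ (l2norm_nonneg _)
          exact_mod_cast hkey
      _ ≤ B ^ 2 := pow_le_pow_left₀ (by positivity) hlast 2
  have hsum : Summable (fun γ => ‖conv f g γ‖ ^ 2) :=
    summable_of_sum_le (fun γ => by positivity) hbound
  refine ⟨hsum, ?_⟩
  have htsum : ∑' γ, ‖conv f g γ‖ ^ 2 ≤ B ^ 2 := Summable.tsum_le_of_sum_le hsum hbound
  rw [l2norm_eq_sqrt]
  calc Real.sqrt (∑' γ, ‖conv f g γ‖ ^ 2) ≤ Real.sqrt (B ^ 2) := Real.sqrt_le_sqrt htsum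
    _ = B := Real.sqrt_sq hBnonneg
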